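/- Let (X,d) be a compact connected metric space in which every pair of points x,y is joined by a unit-speed geodesic (a map γ:[0,d(x,y)]→X with γ(0)=x, γ(d(x,y))=y and d(γ(s),γ(t))=|s−t| for all s,t), let μ be a finite Borel measure on X, and let f:X→[0,∞) be μ-integrable. Let α ∈ (0,1), set c := 4√π·α^{−1}(1−α)^{−1/2} and δ := α²(1−α)/(144π). Assume that for every x∈X: (i) r ↦ V(x,r) is continuous and positive on (0,∞); (ii) V(x,r)/r² → π as r→0⁺; and (iii) for every r>0, V(x,r)^{1/2} ≤ c·( D⁺V(x,·)(r) + ∫_{B(x,r)} f dμ ). Then diam(X) ≤ (576π / (α²(1−α)))·∫_X f dμ. In particular, taking α = 2/3, diam(X) ≤ 3888π·∫_X f dμ. (This is the m=2 case of the paper's main theorem with its explicit constants C(2,α) = 576π/(α²(1−α)) and C(2,2/3) = 3888π, in metric-measure form with f = |H|.) -/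

import Mathlib

open MeasureTheory Filter Set Real



lemma chain_cover (r : ℝ → ℝ) : ∀ (n : ℕ) (T : Finset ℝ), T.card ≤ n →
    ∀ a b : ℝ, a ≤ b → (Icc a b ⊆ ⋃ s ∈ T, Ioo (s - r s) (s + r s)) →
    ∃ A B : Finset ℝ, A ⊆ T ∧ B ⊆ T ∧
      (∀ s ∈ A, ∀ t ∈ A, s ≠ t → r s + r t ≤ |s - t|) ∧
      (∀ s ∈ B, ∀ t ∈ B, s ≠ t → r s + r t ≤ |s - t|) ∧
      (∀ t ∈ B, a ≤ t - r t) ∧ (∀ t ∈ A, a < t + r t) ∧ (∀ t ∈ B, a < t + r t) ∧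
      b - a ≤ 2 * (∑ s ∈ A, r s) + 2 * (∑ s ∈ B, r s) := by
  intro n
  induction n with
  | zero =>
    intro T hT a b hab hcov
    have hTe : T = ∅ := Finset.card_eq_zero.mp (Nat.le_zero.mp hT)
    subst hTe
    have := hcov ⟨le_rfl, hab⟩
    simp at this
  | succ n ih =>
    intro T hT a b hab hcov
    classical
    have ha : a ∈ ⋃ s ∈ T, Ioo (s - r s) (s + r s) := hcov ⟨le_rfl, hab⟩
    simp only [mem_iUnion, mem_Ioo, exists_prop] at ha
    obtain ⟨s₀, hs₀T, hs₀a⟩ := ha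
    set T₀ : Finset ℝ := T.filter (fun s => s - r s < a ∧ a < s + r s) with hT₀
    have hs₀T₀ : s₀ ∈ T₀ := by simp [hT₀, hs₀T, hs₀a.1, hs₀a.2]
    obtain ⟨c₀, hc₀T₀, hmax⟩ := T₀.exists_max_image (fun s => s + r s) ⟨s₀, hs₀T₀⟩
    have hc₀ : c₀ ∈ T ∧ (c₀ - r c₀ < a ∧ a < c₀ + r c₀) := by
      simpa [hT₀] using hc₀T₀
    by_cases hb : b ≤ c₀ + r c₀
    · refine ⟨{c₀}, ∅, by simp [hc₀.1], by simp, ?_, by simp, by simp, ?_, by simp, ?_⟩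
      · intro s hs t ht hst
        simp only [Finset.mem_singleton] at hs ht
        exact absurd (hs.trans ht.symm) hst
      · intro t ht; simp only [Finset.mem_singleton] at ht; subst ht; exact hc₀.2.2
      · simp only [Finset.sum_singleton, Finset.sum_empty]
        have := hc₀.2.1
        linarith
    · push_neg at hb
      have hc₀T := hc₀.1
      have hcard : (T.erase c₀).card ≤ n := by
        have := Finset.card_erase_of_mem hc₀T
        omega
      have hcov' : Icc (c₀ + r c₀) b ⊆ ⋃ s ∈ T.erase c₀, Ioo (s - r s) (s + r s) := by
        intro x hx
        have hx' : x ∈ Icc a b := ⟨le_trans hc₀.2.2.le hx.1, hx.2⟩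
        have := hcov hx'
        simp only [mem_iUnion, mem_Ioo, exists_prop] at this ⊢
        obtain ⟨s, hsT, hsx⟩ := this
        refine ⟨s, Finset.mem_erase.mpr ⟨?_, hsT⟩, hsx⟩
        rintro rfl
        exact absurd (lt_of_le_of_lt hx.1 hsx.2) (lt_irrefl _)
      obtain ⟨A', B', hA'T, hB'T, hsepA', hsepB', hinvB', hrA', hrB', hlen'⟩ :=
        ih (T.erase c₀) hcard (c₀ + r c₀) b hb.le hcov'
      have hB'T' : ∀ t ∈ B', t ∈ T := fun t ht => Finset.mem_of_mem_erase (hB'T ht)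
      have hA'T' : ∀ t ∈ A', t ∈ T := fun t ht => Finset.mem_of_mem_erase (hA'T ht)
      have hc₀notB' : c₀ ∉ B' := fun h => (Finset.mem_erase.mp (hB'T h)).1 rfl
      refine ⟨insert c₀ B', A', ?_, fun t ht => hA'T' t ht, ?_, hsepA', ?_, ?_, ?_, ?_⟩
      · intro t ht
        rcases Finset.mem_insert.mp ht with rfl | ht
        · exact hc₀T
        · exact hB'T' t ht
      · -- sep on insert c₀ B'
        intro s hs t ht hst
        rcases Finset.mem_insert.mp hs with rfl | hs'
        · rcases Finset.mem_insert.mp ht with rfl | ht'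
          · exact absurd rfl hst
          · have h1 := hinvB' t ht'
            have h2 : r s + r t ≤ t - s := by linarith
            calc r s + r t ≤ t - s := h2
              _ ≤ |t - s| := le_abs_self _
              _ = |s - t| := abs_sub_comm _ _
        · rcases Finset.mem_insert.mp ht with rfl | ht'
          · have h1 := hinvB' s hs'
            have h2 : r s + r t ≤ s - t := by linarith
            exact h2.trans (le_abs_self _)
          · exact hsepB' s hs' t ht' hst
      · -- inv B (= A')
        intro t ht
        by_contra hlt
        push_neg at hlt
        have hrt : a < t + r t := lt_trans hc₀.2.2 (hrA' t ht)
        have htT₀ : t ∈ T₀ := by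
          simp only [hT₀, Finset.mem_filter]
          exact ⟨hA'T' t ht, hlt, hrt⟩
        have := hmax t htT₀
        exact absurd (lt_of_lt_of_le (hrA' t ht) this) (lt_irrefl _)
      · intro t ht
        rcases Finset.mem_insert.mp ht with rfl | ht
        · exact hc₀.2.2
        · exact lt_trans hc₀.2.2 (hrB' t ht)
      · intro t ht
        exact lt_trans hc₀.2.2 (hrA' t ht)
      · rw [Finset.sum_insert hc₀notB']
        have := hc₀.2.1
        linarith


set_option maxHeartbeats 1000000 in
lemma key_ball {X : Type*} [MetricSpace X] [MeasurableSpace X]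
    (μ : Measure X) [IsFiniteMeasure μ] (f : X → ℝ)
    (α : ℝ) (hα : α ∈ Set.Ioo (0 : ℝ) 1) (x : X)
    (hVcont : ContinuousOn (fun r : ℝ => (μ (Metric.ball x r)).toReal) (Set.Ioi 0))
    (hVlim : Tendsto (fun r : ℝ => (μ (Metric.ball x r)).toReal / r ^ 2)
        (nhdsWithin 0 (Set.Ioi 0)) (nhds π))
    (hSob : ∀ r : ℝ, 0 < r →
      (μ (Metric.ball x r)).toReal ^ ((1 : ℝ) / 2) ≤
        (4 * Real.sqrt π * α⁻¹ * (1 - α) ^ (-(1 / 2 : ℝ))) *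
          (Filter.liminf
            (fun s : ℝ =>
              ((μ (Metric.ball x (r + s))).toReal - (μ (Metric.ball x r)).toReal) / s)
            (nhdsWithin 0 (Set.Ioi 0))
          + ∫ y in Metric.ball x r, f y ∂μ)) :
    ∃ ρ : ℝ, 0 < ρ ∧
      α ^ 2 * (1 - α) / (144 * π) * ρ ≤ ∫ y in Metric.ball x ρ, f y ∂μ := by
  obtain ⟨hα0, hα1⟩ := hα
  have h1α : (0:ℝ) < 1 - α := by linarith
  have hπ : (0:ℝ) < π := Real.pi_pos
  have hπ3 : (3:ℝ) < π := Real.pi_gt_three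
  set c : ℝ := 4 * Real.sqrt π * α⁻¹ * (1 - α) ^ (-(1 / 2 : ℝ)) with hc_def
  have hc : 0 < c := by
    have := Real.sqrt_pos.mpr hπ
    have := Real.rpow_pos_of_pos h1α (-(1/2 : ℝ))
    positivity
  have hβ : 0 < α ^ 2 * (1 - α) := by positivity
  have hβ1 : α ^ 2 * (1 - α) < 1 := by nlinarith
  have hc2 : c ^ 2 = 16 * π / (α ^ 2 * (1 - α)) := by
    have h1 : (Real.sqrt π) ^ 2 = π := Real.sq_sqrt hπ.le
    have h2 : ((1 - α) ^ (-(1/2 : ℝ))) ^ 2 = (1 - α)⁻¹ := by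
      rw [← Real.rpow_natCast ((1 - α) ^ (-(1/2 : ℝ))) 2, ← Real.rpow_mul h1α.le]
      norm_num
      exact (Real.rpow_neg_one _)
    have h3 : c ^ 2 = 4 ^ 2 * (Real.sqrt π) ^ 2 * (α⁻¹) ^ 2 * ((1 - α) ^ (-(1/2 : ℝ))) ^ 2 := by
      rw [hc_def]; ring
    rw [h3, h1, h2, eq_div_iff (ne_of_gt hβ)]
    field_simp
    norm_num
  set δ : ℝ := α ^ 2 * (1 - α) / (144 * π) with hδ_def
  have hδc : δ = 1 / (9 * c ^ 2) := by
    rw [hδ_def, hc2]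
    field_simp
    ring
  have hδ0 : 0 < δ := by rw [hδc]; positivity
  set k : ℝ := 1 / (16 * c ^ 2) with hk_def
  have hk0 : 0 < k := by positivity
  have hc2gt : 1 < c ^ 2 := by
    rw [hc2, lt_div_iff₀ hβ]
    nlinarith
  have hk1 : k < 1 := by
    rw [hk_def, div_lt_one (by positivity)]
    nlinarith
  have hkπ : k < π := by linarith
  by_contra hcon
  push_neg at hcon
  set V : ℝ → ℝ := fun ρ => (μ (Metric.ball x ρ)).toReal with hV_def
  have hVmono : ∀ ρ₁ ρ₂ : ℝ, ρ₁ ≤ ρ₂ → V ρ₁ ≤ V ρ₂ := fun ρ₁ ρ₂ h =>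
    ENNReal.toReal_mono (measure_ne_top μ _) (measure_mono (Metric.ball_subset_ball h))
  set M : ℝ := (μ Set.univ).toReal with hM_def
  have hM0 : 0 ≤ M := ENNReal.toReal_nonneg
  have hVM : ∀ ρ, V ρ ≤ M := fun ρ =>
    ENNReal.toReal_mono (measure_ne_top μ _) (measure_mono (subset_univ _))
  set r₁ : ℝ := Real.sqrt (M / k) + 1 with hr₁_def
  have hr₁0 : 0 < r₁ := by positivity
  have hVr₁ : V r₁ < k * r₁ ^ 2 := by
    have hs : (Real.sqrt (M / k)) ^ 2 = M / k := Real.sq_sqrt (by positivity)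
    have hsn : 0 ≤ Real.sqrt (M / k) := Real.sqrt_nonneg _
    have h7 : r₁ ^ 2 = M / k + (2 * Real.sqrt (M / k) + 1) := by
      have : r₁ ^ 2 = (Real.sqrt (M / k)) ^ 2 + (2 * Real.sqrt (M / k) + 1) := by
        rw [hr₁_def]; ring
      rw [this, hs]
    have h8 : k * r₁ ^ 2 = M + k * (2 * Real.sqrt (M / k) + 1) := by
      rw [h7, mul_add, mul_div_cancel₀ _ (ne_of_gt hk0)]
    have hpos : 0 < k * (2 * Real.sqrt (M / k) + 1) := by positivity
    calc V r₁ ≤ M := hVM r₁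
      _ < M + k * (2 * Real.sqrt (M / k) + 1) := by linarith
      _ = k * r₁ ^ 2 := h8.symm
  have hev : ∀ᶠ ρ in nhdsWithin (0:ℝ) (Set.Ioi 0), k < V ρ / ρ ^ 2 :=
    hVlim.eventually (eventually_gt_nhds hkπ)
  have hev2 : ∀ᶠ ρ in nhdsWithin (0:ℝ) (Set.Ioi 0), ρ ∈ Set.Ioo (0:ℝ) r₁ := by
    filter_upwards [Ioo_mem_nhdsGT_of_mem (⟨le_rfl, hr₁0⟩ : (0:ℝ) ∈ Set.Ico 0 r₁)] with y hy
    exact hy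
  obtain ⟨r₀, hr₀k, hr₀0, hr₀1⟩ := (hev.and hev2).exists
  have hVr₀ : k * r₀ ^ 2 < V r₀ := by
    have h2 : (0:ℝ) < r₀ ^ 2 := by positivity
    calc k * r₀ ^ 2 < (V r₀ / r₀ ^ 2) * r₀ ^ 2 := by
          exact mul_lt_mul_of_pos_right hr₀k h2
      _ = V r₀ := by field_simp
  set K : Set ℝ := Set.Icc r₀ r₁ ∩ (fun ρ => V ρ - k * ρ ^ 2) ⁻¹' (Set.Ici 0) with hK_def
  have hVcontI : ContinuousOn (fun ρ => V ρ - k * ρ ^ 2) (Set.Icc r₀ r₁) := by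
    apply ContinuousOn.sub
    · exact hVcont.mono (fun y hy => lt_of_lt_of_le hr₀0 hy.1)
    · exact (continuous_const.mul (continuous_pow 2)).continuousOn
  have hKclosed : IsClosed K :=
    hVcontI.preimage_isClosed_of_isClosed isClosed_Icc isClosed_Ici
  have hKcpt : IsCompact K :=
    isCompact_Icc.of_isClosed_subset hKclosed inter_subset_left
  have hKne : K.Nonempty := ⟨r₀, ⟨le_rfl, hr₀1.le⟩, by
    simp only [Set.mem_preimage, Set.mem_Ici, sub_nonneg]
    linarith [hVr₀]⟩
  set r₂ : ℝ := sSup K with hr₂_def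
  have hr₂K : r₂ ∈ K := hKcpt.sSup_mem hKne
  obtain ⟨hr₂I, hr₂V'⟩ := hr₂K
  have hr₂V : k * r₂ ^ 2 ≤ V r₂ := by
    have : (0:ℝ) ≤ V r₂ - k * r₂ ^ 2 := hr₂V'
    linarith
  have hr₂0 : 0 < r₂ := lt_of_lt_of_le hr₀0 hr₂I.1
  have hr₂lt : r₂ < r₁ := by
    rcases lt_or_eq_of_le hr₂I.2 with h | h
    · exact h
    · exfalso; rw [h] at hr₂V; linarith
  have hafter : ∀ ρ, r₂ < ρ → ρ ≤ r₁ → V ρ < k * ρ ^ 2 := by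
    intro ρ hρ hρ1
    by_contra hge
    push_neg at hge
    have hρK : ρ ∈ K := ⟨⟨le_trans hr₂I.1 hρ.le, hρ1⟩, by
      simp only [Set.mem_preimage, Set.mem_Ici, sub_nonneg]; exact hge⟩
    have := le_csSup hKcpt.bddAbove hρK
    rw [← hr₂_def] at this
    linarith
  set Q : ℝ → ℝ := fun s => (V (r₂ + s) - V r₂) / s with hQ_def
  have hbdd : IsBoundedUnder (· ≥ ·) (nhdsWithin (0:ℝ) (Set.Ioi 0)) Q := by
    refine ⟨0, ?_⟩
    rw [Filter.eventually_map]
    apply eventually_nhdsWithin_of_forall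
    intro s hs
    have hs0 : (0:ℝ) < s := hs
    have := hVmono r₂ (r₂ + s) (by linarith)
    exact div_nonneg (by linarith) hs0.le
  set L₀ : ℝ := Filter.liminf Q (nhdsWithin (0:ℝ) (Set.Ioi 0)) with hL₀_def
  have hup : L₀ ≤ 2 * k * r₂ + k * (r₂ / 9) := by
    apply Filter.liminf_le_of_frequently_le _ hbdd
    apply Filter.Eventually.frequently
    have hm : (0:ℝ) < min (r₁ - r₂) (r₂ / 9) := by
      apply lt_min (by linarith) (by linarith)
    filter_upwards [Ioo_mem_nhdsGT_of_mem
      (⟨le_rfl, hm⟩ : (0:ℝ) ∈ Set.Ico 0 (min (r₁ - r₂) (r₂ / 9)))] with s hs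
    obtain ⟨hs0, hsm⟩ := hs
    have hs1 : s < r₁ - r₂ := lt_of_lt_of_le hsm (min_le_left _ _)
    have hs9 : s < r₂ / 9 := lt_of_lt_of_le hsm (min_le_right _ _)
    have hVup : V (r₂ + s) < k * (r₂ + s) ^ 2 := hafter (r₂ + s) (by linarith) (by linarith)
    have hnum : V (r₂ + s) - V r₂ ≤ k * (r₂ + s) ^ 2 - k * r₂ ^ 2 := by linarith
    have h1 : Q s ≤ (k * (r₂ + s) ^ 2 - k * r₂ ^ 2) / s := by
      rw [hQ_def]
      exact div_le_div_of_nonneg_right hnum hs0.le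
    have h2 : (k * (r₂ + s) ^ 2 - k * r₂ ^ 2) / s = k * (2 * r₂ + s) := by
      field_simp; ring
    rw [h2] at h1
    have h3 : k * s ≤ k * (r₂ / 9) := mul_le_mul_of_nonneg_left hs9.le hk0.le
    calc Q s ≤ k * (2 * r₂ + s) := h1
      _ = 2 * k * r₂ + k * s := by ring
      _ ≤ 2 * k * r₂ + k * (r₂ / 9) := by linarith
  -- lower bound
  set I : ℝ := ∫ y in Metric.ball x r₂, f y ∂μ with hI_def
  have hI : I < δ * r₂ := hcon r₂ hr₂0
  have hSr : V r₂ ^ ((1:ℝ) / 2) ≤ c * (L₀ + I) := hSob r₂ hr₂0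
  have hsqrt : Real.sqrt (V r₂) = V r₂ ^ ((1:ℝ) / 2) := Real.sqrt_eq_rpow _
  have h4 : Real.sqrt k = 1 / (4 * c) := by
    rw [hk_def, show (1:ℝ) / (16 * c ^ 2) = (1 / (4 * c)) ^ 2 by rw [div_pow]; ring_nf]
    exact Real.sqrt_sq (by positivity)
  have hsk : (1 / (4 * c)) * r₂ ≤ Real.sqrt (V r₂) := by
    calc (1 / (4 * c)) * r₂ = Real.sqrt k * r₂ := by rw [h4]
      _ = Real.sqrt (k * r₂ ^ 2) := by
          rw [Real.sqrt_mul hk0.le, Real.sqrt_sq hr₂0.le]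
      _ ≤ Real.sqrt (V r₂) := Real.sqrt_le_sqrt hr₂V
  have h5 : (1 / (4 * c)) * r₂ ≤ c * (L₀ + I) := by
    rw [hsqrt] at hsk
    exact hsk.trans hSr
  have h6 : r₂ ≤ 4 * c ^ 2 * (L₀ + I) := by
    have h7 := mul_le_mul_of_nonneg_left h5 (le_of_lt (by positivity : (0:ℝ) < 4 * c))
    calc r₂ = 4 * c * ((1 / (4 * c)) * r₂) := by field_simp
      _ ≤ 4 * c * (c * (L₀ + I)) := h7
      _ = 4 * c ^ 2 * (L₀ + I) := by ring
  -- contradiction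
  have e1r : c ^ 2 * (k * r₂) = 1 / 16 * r₂ := by
    rw [hk_def]; field_simp
  have e2r : c ^ 2 * (δ * r₂) = 1 / 9 * r₂ := by
    rw [hδc]; field_simp
  have hImul : c ^ 2 * I < c ^ 2 * (δ * r₂) :=
    mul_lt_mul_of_pos_left hI (by positivity)
  have hupmul : c ^ 2 * L₀ ≤ c ^ 2 * (2 * k * r₂ + k * (r₂ / 9)) :=
    mul_le_mul_of_nonneg_left hup (by positivity)
  linarith [h6, hImul, hupmul, e1r, e2r, hr₂0]


/-- **Main diameter estimate for surfaces (`m = 2`), with explicit constants.** Let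
`(X,d)` be a compact connected geodesic metric space with a finite Borel measure `μ`,
`f : X → [0,∞)` integrable, `α ∈ (0,1)`, and set `c = 4√π α⁻¹ (1-α)^(-1/2)`. If for
every `x` the volume function `V(x,r) = μ(B(x,r))` is continuous and positive on
`(0,∞)`, satisfies `V(x,r)/r² → π` as `r → 0⁺`, and
`V(x,r)^(1/2) ≤ c (D⁺V(x,·)(r) + ∫_{B(x,r)} f dμ)` for all `r > 0`, then
`diam X ≤ (576π/(α²(1-α))) ∫_X f dμ`; in particular, for `α = 2/3`,
`diam X ≤ 3888π ∫_X f dμ`. -/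
theorem diameter_bound_surface
    {X : Type*} [MetricSpace X] [CompactSpace X] [ConnectedSpace X]
    [MeasurableSpace X] [BorelSpace X]
    (μ : Measure X) [IsFiniteMeasure μ]
    (geodesic : ∀ x y : X, ∃ γ : ℝ → X, γ 0 = x ∧ γ (dist x y) = y ∧
      ∀ s ∈ Set.Icc (0 : ℝ) (dist x y), ∀ t ∈ Set.Icc (0 : ℝ) (dist x y),
        dist (γ s) (γ t) = |s - t|)
    (f : X → ℝ) (hf0 : ∀ x, 0 ≤ f x) (hfint : Integrable f μ)
    (α : ℝ) (hα : α ∈ Set.Ioo (0 : ℝ) 1)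
    (hVcont : ∀ x : X,
      ContinuousOn (fun r : ℝ => (μ (Metric.ball x r)).toReal) (Set.Ioi 0))
    (hVpos : ∀ x : X, ∀ r : ℝ, 0 < r → 0 < (μ (Metric.ball x r)).toReal)
    (hVlim : ∀ x : X,
      Tendsto (fun r : ℝ => (μ (Metric.ball x r)).toReal / r ^ 2)
        (nhdsWithin 0 (Set.Ioi 0)) (nhds π))
    (hSob : ∀ x : X, ∀ r : ℝ, 0 < r →
      (μ (Metric.ball x r)).toReal ^ ((1 : ℝ) / 2) ≤
        (4 * Real.sqrt π * α⁻¹ * (1 - α) ^ (-(1 / 2 : ℝ))) *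
          (Filter.liminf
            (fun s : ℝ =>
              ((μ (Metric.ball x (r + s))).toReal - (μ (Metric.ball x r)).toReal) / s)
            (nhdsWithin 0 (Set.Ioi 0))
          + ∫ y in Metric.ball x r, f y ∂μ)) :
    Metric.diam (Set.univ : Set X) ≤ 576 * π / (α ^ 2 * (1 - α)) * ∫ x, f x ∂μ ∧
      (α = 2 / 3 → Metric.diam (Set.univ : Set X) ≤ 3888 * π * ∫ x, f x ∂μ) := by
  have hπ : (0:ℝ) < π := Real.pi_pos
  have h1α : (0:ℝ) < 1 - α := by linarith [hα.2]
  have hα0 : (0:ℝ) < α := hα.1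
  have hβ : (0:ℝ) < α ^ 2 * (1 - α) := by positivity
  have hδ0 : (0:ℝ) < α ^ 2 * (1 - α) / (144 * π) := by positivity
  have hint : (0:ℝ) ≤ ∫ x, f x ∂μ := integral_nonneg hf0
  have key : ∀ p q : X, dist p q ≤ 576 * π / (α ^ 2 * (1 - α)) * ∫ x, f x ∂μ := by
    intro p q
    obtain ⟨γ, hγ0, hγd, hγiso⟩ := geodesic p q
    set L : ℝ := dist p q with hL
    have hL0 : (0:ℝ) ≤ L := dist_nonneg
    have hkey := fun s : ℝ =>
      key_ball μ f α hα (γ s) (hVcont (γ s)) (hVlim (γ s)) (fun r hr => hSob (γ s) r hr)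
    choose R hR0 hRint using hkey
    have hcov : Set.Icc (0:ℝ) L ⊆ ⋃ s ∈ Set.Icc (0:ℝ) L, Set.Ioo (s - R s) (s + R s) := by
      intro s hs
      exact Set.mem_biUnion hs ⟨by linarith [hR0 s], by linarith [hR0 s]⟩
    obtain ⟨b', hb'sub, hb'fin, hb'cov⟩ := isCompact_Icc.elim_finite_subcover_image
      (fun s _ => isOpen_Ioo) hcov
    have hcovT : Set.Icc (0:ℝ) L ⊆ ⋃ s ∈ hb'fin.toFinset, Set.Ioo (s - R s) (s + R s) := by
      intro x hx
      have := hb'cov hx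
      simp only [Set.mem_iUnion, exists_prop] at this ⊢
      obtain ⟨s, hsb, hsx⟩ := this
      exact ⟨s, hb'fin.mem_toFinset.mpr hsb, hsx⟩
    obtain ⟨A, B, hAT, hBT, hsepA, hsepB, _, _, _, hlen⟩ :=
      chain_cover R hb'fin.toFinset.card hb'fin.toFinset le_rfl 0 L hL0 hcovT
    have hmemIcc : ∀ s ∈ hb'fin.toFinset, s ∈ Set.Icc (0:ℝ) L := fun s hs =>
      hb'sub (hb'fin.mem_toFinset.mp hs)
    have hfam : ∀ S : Finset ℝ, S ⊆ hb'fin.toFinset →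
        (∀ s ∈ S, ∀ t ∈ S, s ≠ t → R s + R t ≤ |s - t|) →
        α ^ 2 * (1 - α) / (144 * π) * ∑ s ∈ S, R s ≤ ∫ x, f x ∂μ := by
      intro S hST hsep
      have hmeas : ∀ s ∈ S, MeasurableSet (Metric.ball (γ s) (R s)) := fun s _ =>
        Metric.isOpen_ball.measurableSet
      have hdisj : (↑S : Set ℝ).Pairwise (Function.onFun Disjoint fun s => Metric.ball (γ s) (R s)) := by
        intro s hs t ht hst
        apply Metric.ball_disjoint_ball
        rw [hγiso s (hmemIcc s (hST hs)) t (hmemIcc t (hST ht))]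
        exact hsep s hs t ht hst
      have hint' : ∀ s ∈ S, IntegrableOn f (Metric.ball (γ s) (R s)) μ := fun s _ =>
        hfint.integrableOn
      calc α ^ 2 * (1 - α) / (144 * π) * ∑ s ∈ S, R s
          = ∑ s ∈ S, α ^ 2 * (1 - α) / (144 * π) * R s := Finset.mul_sum _ _ _
        _ ≤ ∑ s ∈ S, ∫ y in Metric.ball (γ s) (R s), f y ∂μ :=
            Finset.sum_le_sum (fun s _ => hRint s)
        _ = ∫ y in ⋃ s ∈ S, Metric.ball (γ s) (R s), f y ∂μ :=
            (integral_biUnion_finset S hmeas hdisj hint').symm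
        _ ≤ ∫ x, f x ∂μ := setIntegral_le_integral hfint (ae_of_all _ hf0)
    have hA4 := hfam A hAT hsepA
    have hB4 := hfam B hBT hsepB
    have hδL : α ^ 2 * (1 - α) / (144 * π) * L ≤ 4 * ∫ x, f x ∂μ := by
      have h1 := mul_le_mul_of_nonneg_left hlen hδ0.le
      rw [mul_sub] at h1
      nlinarith [h1, hA4, hB4]
    have h2 : L = (144 * π / (α ^ 2 * (1 - α))) * (α ^ 2 * (1 - α) / (144 * π) * L) := by
      field_simp
    calc L = (144 * π / (α ^ 2 * (1 - α))) * (α ^ 2 * (1 - α) / (144 * π) * L) := h2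
      _ ≤ (144 * π / (α ^ 2 * (1 - α))) * (4 * ∫ x, f x ∂μ) :=
          mul_le_mul_of_nonneg_left hδL (by positivity)
      _ = 576 * π / (α ^ 2 * (1 - α)) * ∫ x, f x ∂μ := by ring
  have hmain : Metric.diam (Set.univ : Set X) ≤ 576 * π / (α ^ 2 * (1 - α)) * ∫ x, f x ∂μ :=
    Metric.diam_le_of_forall_dist_le (mul_nonneg (by positivity) hint)
      (fun p _ q _ => key p q)
  refine ⟨hmain, fun h23 => ?_⟩
  rw [h23] at hmain
  have heq : 576 * π / ((2/3:ℝ) ^ 2 * (1 - 2/3)) = 3888 * π := by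
    rw [show ((2/3:ℝ) ^ 2 * (1 - 2/3)) = 4/27 by norm_num]
    ring
  rwa [heq] at hmain
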